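/- Let n ≥ 1 and let G be a finite subgroup of GL(n, ℝ), acting on ℝⁿ by matrix–vector multiplication. Suppose h : ℝⁿ → ℝⁿ is continuously differentiable and for every x ∈ ℝⁿ there exists γ ∈ G with h(x) = γ·x (i.e., h is a lift of the identity map of the quotient ℝⁿ/G). Then there exists a single element γ ∈ G such that h(x) = γ·x for every x ∈ ℝⁿ; in particular h is a diffeomorphism. -/

import Mathlib

/-- Any continuously differentiable lift of the identity map of the quotient
ℝⁿ/G, where G is a finite subgroup of GL(n,ℝ) acting by matrix–vector multiplication,
coincides with the action of a single element of G; in particular it is a diffeomorphism. -/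
theorem lift_of_identity_is_group_element
    (n : ℕ) (hn : 1 ≤ n) (G : Subgroup (GL (Fin n) ℝ)) [Finite G]
    (h : (Fin n → ℝ) → (Fin n → ℝ)) (hC1 : ContDiff ℝ 1 h)
    (hlift : ∀ x : Fin n → ℝ, ∃ γ ∈ G,
      h x = Matrix.mulVec ((γ : GL (Fin n) ℝ) : Matrix (Fin n) (Fin n) ℝ) x) :
    (∃ γ ∈ G, ∀ x : Fin n → ℝ,
      h x = Matrix.mulVec ((γ : GL (Fin n) ℝ) : Matrix (Fin n) (Fin n) ℝ) x) ∧
    Function.Bijective h := by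
  classical
  -- continuous linear map associated to γ
  set L : G → ((Fin n → ℝ) →L[ℝ] (Fin n → ℝ)) := fun γ =>
    LinearMap.toContinuousLinearMap
      (Matrix.mulVecLin ((γ : GL (Fin n) ℝ) : Matrix (Fin n) (Fin n) ℝ)) with hL
  have hLapp : ∀ (γ : G) (x : Fin n → ℝ),
      L γ x = Matrix.mulVec ((γ : GL (Fin n) ℝ) : Matrix (Fin n) (Fin n) ℝ) x := by
    intro γ x; simp [hL]
  set A : G → Set (Fin n → ℝ) := fun γ => {x | h x = L γ x} with hA
  have hAclosed : ∀ γ, IsClosed (A γ) :=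
    fun γ => isClosed_eq hC1.continuous (L γ).continuous
  have hAcover : ⋃ γ, A γ = Set.univ := by
    ext x
    simp only [Set.mem_iUnion, Set.mem_univ, iff_true]
    obtain ⟨γ, hγ, hx⟩ := hlift x
    exact ⟨⟨γ, hγ⟩, by simpa [hA, hLapp] using hx⟩
  have hdense : Dense (⋃ γ, interior (A γ)) :=
    dense_iUnion_interior_of_closed hAclosed hAcover
  have hcont : Continuous (fderiv ℝ h) := hC1.continuous_fderiv one_ne_zero
  set S : Set ((Fin n → ℝ) →L[ℝ] (Fin n → ℝ)) := Set.range L with hS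
  have hSfin : S.Finite := Set.finite_range L
  -- on the dense set, the derivative lies in S
  have hDS : ∀ x ∈ ⋃ γ, interior (A γ), fderiv ℝ h x ∈ S := by
    intro x hx
    rw [Set.mem_iUnion] at hx
    obtain ⟨γ, hx⟩ := hx
    have heq : h =ᶠ[nhds x] (L γ) := by
      filter_upwards [(isOpen_interior).mem_nhds hx] with y hy
      have hy' : y ∈ A γ := interior_subset hy
      exact hy'
    have := Filter.EventuallyEq.fderiv_eq (𝕜 := ℝ) heq
    rw [(L γ).fderiv] at this
    exact ⟨γ, this.symm⟩
  -- hence everywhere, by continuity and closedness of S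
  have hDSall : ∀ x, fderiv ℝ h x ∈ S := by
    intro x
    have hxcl : x ∈ closure (⋃ γ, interior (A γ)) := hdense x
    have : fderiv ℝ h x ∈ closure S := by
      have : fderiv ℝ h x ∈ closure (fderiv ℝ h '' (⋃ γ, interior (A γ))) := by
        have := (hcont.continuousAt (x := x))
        exact hcont.continuousWithinAt.mem_closure_image hxcl
      refine closure_mono ?_ this
      rintro _ ⟨y, hy, rfl⟩
      exact hDS y hy
    rwa [hSfin.isClosed.closure_eq] at this
  -- the derivative is constant
  set L0 := fderiv ℝ h 0 with hL0
  have hconst : ∀ x, fderiv ℝ h x = L0 := by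
    intro x
    set C : Set (Fin n → ℝ) := {x | fderiv ℝ h x = L0} with hC
    have hCclosed : IsClosed C := isClosed_eq hcont continuous_const
    have hCopen : IsOpen C := by
      rw [← isClosed_compl_iff]
      have : Cᶜ = fderiv ℝ h ⁻¹' (S \ {L0}) := by
        ext y
        simp only [Set.mem_compl_iff, hC, Set.mem_setOf_eq, Set.mem_preimage,
          Set.mem_diff, Set.mem_singleton_iff]
        exact ⟨fun hy => ⟨hDSall y, hy⟩, fun hy => hy.2⟩
      rw [this]
      exact ((hSfin.subset Set.diff_subset).isClosed).preimage hcont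
    have : C = Set.univ := by
      rcases isClopen_iff.mp ⟨hCclosed, hCopen⟩ with h0 | h1
      · exact absurd (Set.eq_empty_iff_forall_notMem.mp h0 0) (by simp [hC, hL0])
      · exact h1
    exact (Set.eq_univ_iff_forall.mp this) x
  obtain ⟨γ, hγ⟩ := hDSall 0
  rw [← hL0] at hγ
  -- h equals L0
  have hzero : h 0 = 0 := by
    obtain ⟨δ, _, hδ⟩ := hlift 0
    simpa using hδ
  have hdiff : Differentiable ℝ h := hC1.differentiable one_ne_zero
  have key : ∀ x, h x = L0 x := by
    have hg : Differentiable ℝ (fun x => h x - L0 x) := hdiff.sub (L0.differentiable)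
    have hg' : ∀ x, fderiv ℝ (fun x => h x - L0 x) x = 0 := by
      intro x
      rw [fderiv_fun_sub (hdiff x) (L0.differentiableAt), L0.fderiv, hconst x, sub_self]
    intro x
    have := is_const_of_fderiv_eq_zero hg hg' x 0
    simpa [hzero, sub_eq_zero] using this
  have hmain : ∀ x, h x = Matrix.mulVec ((γ : GL (Fin n) ℝ) : Matrix (Fin n) (Fin n) ℝ) x := by
    intro x
    rw [key x, ← hγ, hLapp]
  refine ⟨⟨γ, γ.2, hmain⟩, ?_⟩
  set M : Matrix (Fin n) (Fin n) ℝ := ((γ : GL (Fin n) ℝ) : Matrix (Fin n) (Fin n) ℝ) with hM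
  set Minv : Matrix (Fin n) (Fin n) ℝ :=
    ((((γ : GL (Fin n) ℝ))⁻¹ : GL (Fin n) ℝ) : Matrix (Fin n) (Fin n) ℝ) with hMinv
  have hinv1 : Minv * M = 1 := Units.inv_mul _
  have hinv2 : M * Minv = 1 := Units.mul_inv _
  have hfun : h = fun x => M.mulVec x := funext hmain
  rw [hfun]
  constructor
  · intro a b hab
    have := congrArg (Matrix.mulVec Minv) hab
    simpa [Matrix.mulVec_mulVec, hinv1, Matrix.one_mulVec] using this
  · intro y
    refine ⟨Minv.mulVec y, ?_⟩
    simp [Matrix.mulVec_mulVec, hinv2, Matrix.one_mulVec]
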